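/- Let t ≥ 1 and let c = (c_0,…,c_{t−1}) ∈ ℤ^t with Σ c_j = 0. Define the t-core partition λ_c by its arm and leg sets: for each j with c_j ≥ 0, the arms congruent to j mod t are {qt + j : 0 ≤ q ≤ c_j − 1} and there are no legs congruent to t−j−1 mod t; for each j with c_j ≤ 0, the legs congruent to t−j−1 mod t are {qt + t−j−1 : 0 ≤ q ≤ |c_j| − 1} and there are no arms congruent to j mod t. Then |λ_c| = (t/2)·Σ_{j=0}^{t−1} c_j² + Σ_{j=0}^{t−1} j·c_j. -/
import Mathlib

private lemma tcore_gauss (T J : ℤ) (n : ℕ) :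
    2 * ∑ q ∈ Finset.range n, ((q : ℤ) * T + J)
      = (n : ℤ) * ((n : ℤ) - 1) * T + 2 * (n : ℤ) * J := by
  induction n with
  | zero => simp
  | succ k ih =>
    rw [Finset.sum_range_succ, mul_add, ih]
    push_cast
    ring

private lemma tcore_term (t j : ℕ) (hj : j < t) (cj : ℤ) :
    2 * (((cj.toNat : ℤ))
        + ∑ q ∈ Finset.range cj.toNat, ((q : ℤ) * t + j)
        + ∑ q ∈ Finset.range (-cj).toNat, ((q : ℤ) * t + ((t : ℤ) - j - 1)))
      = t * cj ^ 2 + 2 * j * cj + ((2 : ℤ) - t) * cj := by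
  set n : ℕ := cj.toNat with hn
  set m : ℕ := (-cj).toNat with hm
  have hc : (n : ℤ) - (m : ℤ) = cj := Int.toNat_sub_toNat_neg cj
  have hnm : (n : ℤ) * (m : ℤ) = 0 := by
    rcases le_or_gt cj 0 with h | h
    · have : n = 0 := by rw [hn]; omega
      simp [this]
    · have : m = 0 := by rw [hm]; omega
      simp [this]
  have h1 := tcore_gauss (t : ℤ) (j : ℤ) n
  have h2 := tcore_gauss (t : ℤ) ((t : ℤ) - j - 1) m
  rw [← hc]
  linear_combination h1 + h2 + 2 * (t : ℤ) * hnm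

/-- Let `t ≥ 1` and `c : ℕ → ℤ` with `∑_{j<t} c j = 0`. The `t`-core
partition `λ_c` has arm set `A = ⋃_{c j > 0} {q*t + j : 0 ≤ q < c j}` and leg set
`L = ⋃_{c j < 0} {q*t + (t-j-1) : 0 ≤ q < |c j|}`, and its size is
`|A| + ∑ A + ∑ L`. Then `|λ_c| = (t/2) ∑ (c j)² + ∑ j * c j`, stated here
multiplied through by `2`. -/
theorem tcore_size
    (t : ℕ) (ht : 0 < t) (c : ℕ → ℤ)
    (hsum : ∑ j ∈ Finset.range t, c j = 0) :
    2 * (((((Finset.range t).biUnion fun j =>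
              (Finset.range (c j).toNat).image fun q => q * t + j).card
          + ∑ a ∈ ((Finset.range t).biUnion fun j =>
              (Finset.range (c j).toNat).image fun q => q * t + j), a
          + ∑ l ∈ ((Finset.range t).biUnion fun j =>
              (Finset.range (-c j).toNat).image fun q => q * t + (t - j - 1)), l : ℕ)) : ℤ)
      = t * ∑ j ∈ Finset.range t, c j ^ 2
        + 2 * ∑ j ∈ Finset.range t, (j : ℤ) * c j := by
  have hmod : ∀ (q j : ℕ), j < t → (q * t + j) % t = j := by
    intro q j hj
    rw [Nat.add_comm, Nat.add_mul_mod_self_right, Nat.mod_eq_of_lt hj]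
  -- generic disjointness lemma
  have hdisj : ∀ (g k : ℕ → ℕ), (∀ j < t, g j < t) →
      (∀ x < t, ∀ y < t, g x = g y → x = y) →
      ∀ x ∈ Finset.range t, ∀ y ∈ Finset.range t, x ≠ y →
        Disjoint ((Finset.range (k x)).image fun q => q * t + g x)
          ((Finset.range (k y)).image fun q => q * t + g y) := by
    intro g k hg hginj x hx y hy hxy
    simp only [Finset.mem_range] at hx hy
    rw [Finset.disjoint_left]
    rintro a ha hb
    simp only [Finset.mem_image, Finset.mem_range] at ha hb
    obtain ⟨q₁, -, rfl⟩ := ha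
    obtain ⟨q₂, -, h⟩ := hb
    have e1 := hmod q₁ (g x) (hg x hx)
    have e2 := hmod q₂ (g y) (hg y hy)
    rw [h] at e2
    exact hxy (hginj x hx y hy (by omega))
  have hinj : ∀ j, Function.Injective (fun q : ℕ => q * t + j) := by
    intro j q₁ q₂ h
    simp only at h
    have : q₁ * t = q₂ * t := by omega
    exact Nat.eq_of_mul_eq_mul_right ht this
  have hd1 : ∀ x ∈ Finset.range t, ∀ y ∈ Finset.range t, x ≠ y →
      Disjoint ((Finset.range (c x).toNat).image fun q => q * t + x)
        ((Finset.range (c y).toNat).image fun q => q * t + y) :=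
    hdisj id (fun j => (c j).toNat) (fun j hj => hj) (fun x _ y _ h => h)
  have hd2 : ∀ x ∈ Finset.range t, ∀ y ∈ Finset.range t, x ≠ y →
      Disjoint ((Finset.range (-c x).toNat).image fun q => q * t + (t - x - 1))
        ((Finset.range (-c y).toNat).image fun q => q * t + (t - y - 1)) :=
    hdisj (fun j => t - j - 1) (fun j => (- c j).toNat)
      (fun j hj => by show t - j - 1 < t; omega)
      (fun x hx y hy h => by have h' : t - x - 1 = t - y - 1 := h; omega)
  rw [Finset.card_biUnion hd1, Finset.sum_biUnion (by exact fun x hx y hy hxy => hd1 x hx y hy hxy),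
    Finset.sum_biUnion (by exact fun x hx y hy hxy => hd2 x hx y hy hxy)]
  simp only [Finset.card_image_of_injective _ (hinj _), Finset.card_range,
    Finset.sum_image (fun a _ b _ h => hinj _ h)]
  push_cast
  rw [← Finset.sum_add_distrib, ← Finset.sum_add_distrib, Finset.mul_sum]
  have key : ∀ j ∈ Finset.range t,
      2 * (((c j).toNat : ℤ)
          + ∑ q ∈ Finset.range (c j).toNat, ((q : ℤ) * t + j)
          + ∑ q ∈ Finset.range (-c j).toNat, ((q : ℤ) * t + ((t - j - 1 : ℕ) : ℤ)))
        = (t : ℤ) * c j ^ 2 + 2 * j * c j + ((2 : ℤ) - t) * c j := by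
    intro j hj
    simp only [Finset.mem_range] at hj
    have hcast : ((t - j - 1 : ℕ) : ℤ) = (t : ℤ) - j - 1 := by omega
    rw [hcast]
    exact tcore_term t j hj (c j)
  rw [Finset.sum_congr rfl key]
  rw [Finset.sum_add_distrib, Finset.sum_add_distrib, ← Finset.mul_sum]
  have e1 : ∑ x ∈ Finset.range t, 2 * (x : ℤ) * c x = 2 * ∑ x ∈ Finset.range t, (x : ℤ) * c x := by
    rw [Finset.mul_sum]; exact Finset.sum_congr rfl fun x _ => by ring
  have e2 : ∑ x ∈ Finset.range t, ((2 : ℤ) - t) * c x = 0 := by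
    rw [← Finset.mul_sum, hsum, mul_zero]
  rw [e1, e2, add_zero]
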